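/- Let γ > 0, λ > 0, ω > 0, and let ψ be the asymmetric non-sign-changing stationary state: ψ(x) = √(2ω/λ)·sech(√ω(x − x₁)) for x < 0 and ψ(x) = √(2ω/λ)·sech(√ω(x − x₂)) for x > 0, where x_i = (1/(2√ω))·log((1 + t_i)/(1 − t_i)) with t₁ = (1 − √(1 + γ²ω) + √(γ²ω − 2 + 2√(1 + γ²ω)))/(2γ√ω), t₂ = (−1 + √(1 + γ²ω) + √(γ²ω − 2 + 2√(1 + γ²ω)))/(2γ√ω). Then: (i) ∫_ℝ ψ² dx = 4√ω/λ + (2/(λγ))√(1 + γ²ω) − 2/(λγ); (ii) E_{γδ'}(ψ) = −(2/(3λ))ω^{3/2} + ((2 − γ²ω)/(3λγ³))·√(γ²ω + 1) − 2/(3λγ³); (iii) S_ω(ψ) := E_{γδ'}(ψ) + (ω/2)∫_ℝ ψ² dx = (4/(3λ))ω^{3/2} + (2/(3λγ³))(γ²ω + 1)^{3/2} − ω/(λγ) − 2/(3λγ³). -/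

import Mathlib

open MeasureTheory Real Filter Set Topology

noncomputable section

/-- sech x = 1 / cosh x -/
def sech (x : ℝ) : ℝ := 1 / Real.cosh x



lemma tanh_eq_exp (x : ℝ) :
    Real.tanh x = (1 - Real.exp (-(2*x))) / (1 + Real.exp (-(2*x))) := by
  have h1 : Real.exp (-(2*x)) = Real.exp (-x) * Real.exp (-x) := by
    rw [← Real.exp_add]; ring_nf
  have h2 : Real.exp x * Real.exp (-x) = 1 := by
    rw [← Real.exp_add]; simp
  have hd : (Real.exp x + Real.exp (-x)) ≠ 0 := by positivity
  have hd2 : (1 + Real.exp (-(2*x))) ≠ 0 := by positivity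
  rw [Real.tanh_eq_sinh_div_cosh, Real.sinh_eq, Real.cosh_eq]
  rw [div_eq_div_iff (by positivity) hd2]
  nlinarith [h2, Real.exp_pos x, Real.exp_pos (-x)]

lemma tendsto_tanh_atTop : Tendsto Real.tanh atTop (𝓝 1) := by
  have h : Tendsto (fun x : ℝ => Real.exp (-(2*x))) atTop (𝓝 0) := by
    apply Real.tendsto_exp_atBot.comp
    apply tendsto_neg_atBot_iff.mpr
    exact (tendsto_id.const_mul_atTop (by norm_num : (0:ℝ) < 2))
  have h2 := (((tendsto_const_nhds : Tendsto (fun _ : ℝ => (1:ℝ)) atTop (𝓝 1)).sub h).div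
    ((tendsto_const_nhds : Tendsto (fun _ : ℝ => (1:ℝ)) atTop (𝓝 1)).add h)
    (by norm_num : (1:ℝ) + 0 ≠ 0))
  simp only [sub_zero, add_zero, div_one] at h2
  exact Tendsto.congr (fun x => (tanh_eq_exp x).symm) h2

lemma tendsto_tanh_atBot : Tendsto Real.tanh atBot (𝓝 (-1)) := by
  have h : Tendsto (fun x : ℝ => - Real.tanh (-x)) atBot (𝓝 (-1)) := by
    exact (tendsto_tanh_atTop.comp tendsto_neg_atBot_atTop).neg
  refine h.congr fun x => ?_
  rw [Real.tanh_neg, neg_neg]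

lemma tanh_cosh_half_log {t : ℝ} (h1 : -1 < t) (h2 : t < 1) :
    Real.tanh ((1/2) * Real.log ((1+t)/(1-t))) = t ∧
    Real.cosh ((1/2) * Real.log ((1+t)/(1-t))) = 1 / Real.sqrt (1 - t^2) := by
  have hp : 0 < 1 + t := by linarith
  have hm : 0 < 1 - t := by linarith
  have ha : 0 < (1+t)/(1-t) := by positivity
  set p := Real.sqrt (1+t) with hpdef
  set m := Real.sqrt (1-t) with hmdef
  have hp0 : 0 < p := Real.sqrt_pos.mpr hp
  have hm0 : 0 < m := Real.sqrt_pos.mpr hm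
  have hp2 : p^2 = 1 + t := Real.sq_sqrt hp.le
  have hm2 : m^2 = 1 - t := Real.sq_sqrt hm.le
  have he : Real.exp ((1/2) * Real.log ((1+t)/(1-t))) = p / m := by
    rw [show (1/2) * Real.log ((1+t)/(1-t)) = Real.log ((1+t)/(1-t)) / 2 by ring,
      Real.exp_half, Real.exp_log ha, Real.sqrt_div' _ hm.le]
  have hen : Real.exp (-((1/2) * Real.log ((1+t)/(1-t)))) = m / p := by
    rw [Real.exp_neg, he, inv_div]
  have hsq : Real.sqrt (1 - t^2) = p * m := by
    rw [show 1 - t^2 = (1+t)*(1-t) by ring, Real.sqrt_mul hp.le]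
  constructor
  · rw [Real.tanh_eq_sinh_div_cosh, Real.sinh_eq, Real.cosh_eq, he, hen]
    rw [div_eq_iff (by positivity)]
    field_simp
    linear_combination (1 - t) * hp2 - (1 + t) * hm2
  · rw [Real.cosh_eq, he, hen, hsq, eq_div_iff (by positivity)]
    field_simp
    linear_combination hp2 + hm2


lemma hasDerivAt_tanh (u : ℝ) : HasDerivAt Real.tanh ((1/Real.cosh u)^2) u := by
  have hd := (Real.hasDerivAt_sinh u).div (Real.hasDerivAt_cosh u) (ne_of_gt (Real.cosh_pos u))
  have he : (Real.sinh / Real.cosh) = Real.tanh := by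
    funext x; rw [Pi.div_apply, Real.tanh_eq_sinh_div_cosh]
  rw [he] at hd
  refine hd.congr_deriv ?_
  have h := Real.cosh_sq_sub_sinh_sq u
  have h0 := (Real.cosh_pos u).ne'
  field_simp
  linear_combination h

lemma tanh_sq (u : ℝ) : Real.tanh u ^ 2 = 1 - (1/Real.cosh u)^2 := by
  have h := Real.cosh_sq_sub_sinh_sq u
  have h0 := (Real.cosh_pos u).ne'
  rw [Real.tanh_eq_sinh_div_cosh]
  field_simp
  linear_combination -h

lemma hasDerivAt_lin (c b x : ℝ) : HasDerivAt (fun y => c * (y - b)) c x := by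
  simpa using (((hasDerivAt_id x).sub_const b).const_mul c)

lemma tendsto_lin_atTop {c : ℝ} (hc : 0 < c) (b : ℝ) :
    Tendsto (fun x => c * (x - b)) atTop atTop := by
  apply Tendsto.const_mul_atTop hc
  have := tendsto_atTop_add_const_right atTop (-b) tendsto_id
  refine this.congr fun x => ?_
  simp [sub_eq_add_neg]

lemma tendsto_tanh_lin {c : ℝ} (hc : 0 < c) (b : ℝ) :
    Tendsto (fun x => Real.tanh (c * (x - b))) atTop (𝓝 1) :=
  tendsto_tanh_atTop.comp (tendsto_lin_atTop hc b)

/-- main Ioi integral lemmas -/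
lemma I2pos {c : ℝ} (hc : 0 < c) (b : ℝ) :
    (∫ x in Ioi (0:ℝ), (1/Real.cosh (c*(x-b)))^2) = (1 + Real.tanh (c*b))/c ∧
    IntegrableOn (fun x => (1/Real.cosh (c*(x-b)))^2) (Ioi (0:ℝ)) := by
  have hderiv : ∀ x ∈ Ici (0:ℝ), HasDerivAt (fun y => Real.tanh (c*(y-b)) / c)
      ((1/Real.cosh (c*(x-b)))^2) x := by
    intro x _
    have h := ((hasDerivAt_tanh (c*(x-b))).comp x (hasDerivAt_lin c b x)).div_const c
    refine h.congr_deriv ?_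
    field_simp
  have hpos : ∀ x ∈ Ioi (0:ℝ), 0 ≤ (1/Real.cosh (c*(x-b)))^2 := fun x _ => sq_nonneg _
  have htend : Tendsto (fun x => Real.tanh (c*(x-b)) / c) atTop (𝓝 (1/c)) :=
    (tendsto_tanh_lin hc b).div_const c
  refine ⟨?_, integrableOn_Ioi_deriv_of_nonneg' hderiv hpos htend⟩
  rw [integral_Ioi_of_hasDerivAt_of_nonneg' hderiv hpos htend]
  rw [show c*((0:ℝ)-b) = -(c*b) by ring, Real.tanh_neg]
  ring

lemma I4pos {c : ℝ} (hc : 0 < c) (b : ℝ) :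
    (∫ x in Ioi (0:ℝ), (1/Real.cosh (c*(x-b)))^4) =
      (2/3 + Real.tanh (c*b) - Real.tanh (c*b)^3/3)/c ∧
    IntegrableOn (fun x => (1/Real.cosh (c*(x-b)))^4) (Ioi (0:ℝ)) := by
  have hderiv : ∀ x ∈ Ici (0:ℝ), HasDerivAt
      (fun y => (Real.tanh (c*(y-b)) - Real.tanh (c*(y-b))^3/3) / c)
      ((1/Real.cosh (c*(x-b)))^4) x := by
    intro x _
    have h1 := (hasDerivAt_tanh (c*(x-b))).comp x (hasDerivAt_lin c b x)
    have h := (h1.sub ((h1.pow 3).div_const 3)).div_const c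
    refine h.congr_deriv ?_
    have h0 := (Real.cosh_pos (c*(x-b))).ne'
    simp only [Function.comp]
    norm_num
    rw [tanh_sq]
    field_simp
    ring
  have hpos : ∀ x ∈ Ioi (0:ℝ), 0 ≤ (1/Real.cosh (c*(x-b)))^4 := fun x _ => by positivity
  have htend : Tendsto (fun x => (Real.tanh (c*(x-b)) - Real.tanh (c*(x-b))^3/3) / c)
      atTop (𝓝 ((1 - 1^3/3)/c)) := by
    exact (((tendsto_tanh_lin hc b).sub (((tendsto_tanh_lin hc b).pow 3).div_const 3)).div_const c)
  refine ⟨?_, integrableOn_Ioi_deriv_of_nonneg' hderiv hpos htend⟩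
  rw [integral_Ioi_of_hasDerivAt_of_nonneg' hderiv hpos htend]
  rw [show c*((0:ℝ)-b) = -(c*b) by ring, Real.tanh_neg]
  ring

lemma I22pos {c : ℝ} (hc : 0 < c) (b : ℝ) :
    (∫ x in Ioi (0:ℝ), (1/Real.cosh (c*(x-b)))^2 * Real.tanh (c*(x-b))^2) =
      (1 + Real.tanh (c*b)^3)/(3*c) ∧
    IntegrableOn (fun x => (1/Real.cosh (c*(x-b)))^2 * Real.tanh (c*(x-b))^2) (Ioi (0:ℝ)) := by
  have hderiv : ∀ x ∈ Ici (0:ℝ), HasDerivAt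
      (fun y => Real.tanh (c*(y-b))^3 / (3*c))
      ((1/Real.cosh (c*(x-b)))^2 * Real.tanh (c*(x-b))^2) x := by
    intro x _
    have h1 := (hasDerivAt_tanh (c*(x-b))).comp x (hasDerivAt_lin c b x)
    have h := (h1.pow 3).div_const (3*c)
    refine h.congr_deriv ?_
    simp only [Function.comp_apply]
    field_simp
    ring
  have hpos : ∀ x ∈ Ioi (0:ℝ), 0 ≤ (1/Real.cosh (c*(x-b)))^2 * Real.tanh (c*(x-b))^2 :=
    fun x _ => by positivity
  have htend : Tendsto (fun x => Real.tanh (c*(x-b))^3 / (3*c)) atTop (𝓝 (1^3/(3*c))) :=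
    ((tendsto_tanh_lin hc b).pow 3).div_const (3*c)
  refine ⟨?_, integrableOn_Ioi_deriv_of_nonneg' hderiv hpos htend⟩
  rw [integral_Ioi_of_hasDerivAt_of_nonneg' hderiv hpos htend]
  rw [show c*((0:ℝ)-b) = -(c*b) by ring, Real.tanh_neg]
  ring

lemma integral_Iio_comp (G : ℝ → ℝ) :
    (∫ x in Iio (0:ℝ), G x) = ∫ x in Ioi (0:ℝ), G (-x) := by
  rw [integral_comp_neg_Ioi 0 G, neg_zero, integral_Iic_eq_integral_Iio]

lemma integrableOn_Iio_comp {G : ℝ → ℝ} (h : IntegrableOn (fun x => G (-x)) (Ioi (0:ℝ))) :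
    IntegrableOn G (Iio (0:ℝ)) := by
  have := (MeasurePreserving.integrableOn_comp_preimage
    (Measure.measurePreserving_neg (volume : Measure ℝ))
    (Homeomorph.neg ℝ).measurableEmbedding).2 h
  have he : ((fun x => G (-x)) ∘ Neg.neg) = G := by funext x; simp
  have hs : (Neg.neg ⁻¹' Ioi (0:ℝ)) = Iio 0 := by ext x; simp
  rwa [he, hs] at this

lemma integral_Iio_comp' (G F : ℝ → ℝ) (h : ∀ x, G (-x) = F x) :
    (∫ x in Iio (0:ℝ), G x) = ∫ x in Ioi (0:ℝ), F x := by
  have h2 : (∫ x in Ioi (0:ℝ), F x) = ∫ x in Ioi (0:ℝ), G (-x) :=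
    setIntegral_congr_fun measurableSet_Ioi fun x _ => (h x).symm
  rw [h2, integral_comp_neg_Ioi, neg_zero, integral_Iic_eq_integral_Iio]

lemma integrableOn_Iio_comp' {G F : ℝ → ℝ} (h : ∀ x, G (-x) = F x)
    (hF : IntegrableOn F (Ioi (0:ℝ))) : IntegrableOn G (Iio (0:ℝ)) := by
  apply integrableOn_Iio_comp
  rw [show (fun x => G (-x)) = F from funext h]
  exact hF

lemma I2neg {c : ℝ} (hc : 0 < c) (b : ℝ) :
    (∫ x in Iio (0:ℝ), (1/Real.cosh (c*(x-b)))^2) = (1 - Real.tanh (c*b))/c ∧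
    IntegrableOn (fun x => (1/Real.cosh (c*(x-b)))^2) (Iio (0:ℝ)) := by
  have h : ∀ x:ℝ, (1/Real.cosh (c*(-x - b)))^2 = (1/Real.cosh (c*(x - -b)))^2 := by
    intro x; rw [show c*(-x - b) = -(c*(x - -b)) by ring, Real.cosh_neg]
  constructor
  · rw [integral_Iio_comp' _ _ h, (I2pos hc (-b)).1,
      show c*(-b) = -(c*b) by ring, Real.tanh_neg]
    ring
  · exact integrableOn_Iio_comp' h (I2pos hc (-b)).2

lemma I4neg {c : ℝ} (hc : 0 < c) (b : ℝ) :
    (∫ x in Iio (0:ℝ), (1/Real.cosh (c*(x-b)))^4)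
      = (2/3 - Real.tanh (c*b) + Real.tanh (c*b)^3/3)/c ∧
    IntegrableOn (fun x => (1/Real.cosh (c*(x-b)))^4) (Iio (0:ℝ)) := by
  have h : ∀ x:ℝ, (1/Real.cosh (c*(-x - b)))^4 = (1/Real.cosh (c*(x - -b)))^4 := by
    intro x; rw [show c*(-x - b) = -(c*(x - -b)) by ring, Real.cosh_neg]
  constructor
  · rw [integral_Iio_comp' _ _ h, (I4pos hc (-b)).1,
      show c*(-b) = -(c*b) by ring, Real.tanh_neg]
    ring
  · exact integrableOn_Iio_comp' h (I4pos hc (-b)).2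

lemma I22neg {c : ℝ} (hc : 0 < c) (b : ℝ) :
    (∫ x in Iio (0:ℝ), (1/Real.cosh (c*(x-b)))^2 * Real.tanh (c*(x-b))^2)
      = (1 - Real.tanh (c*b)^3)/(3*c) ∧
    IntegrableOn (fun x => (1/Real.cosh (c*(x-b)))^2 * Real.tanh (c*(x-b))^2) (Iio (0:ℝ)) := by
  have h : ∀ x:ℝ, (1/Real.cosh (c*(-x - b)))^2 * Real.tanh (c*(-x - b))^2
      = (1/Real.cosh (c*(x - -b)))^2 * Real.tanh (c*(x - -b))^2 := by
    intro x
    rw [show c*(-x - b) = -(c*(x - -b)) by ring, Real.cosh_neg, Real.tanh_neg]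
    ring
  constructor
  · rw [integral_Iio_comp' _ _ h, (I22pos hc (-b)).1,
      show c*(-b) = -(c*b) by ring, Real.tanh_neg]
    ring
  · exact integrableOn_Iio_comp' h (I22pos hc (-b)).2
set_option maxHeartbeats 2000000 in
/-- L²-norm, delta-prime energy and action of the asymmetric non-sign-changing stationary
state of the cubic NLS with a delta-prime interaction of strength γ. Here `f₁`, `f₂` are the
two branches of ψ, so ψ(0−) = f₁ 0 and ψ(0+) = f₂ 0. -/
theorem statement11 (γ lam ω : ℝ) (hγ : 0 < γ) (hlam : 0 < lam) (hω : 0 < ω)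
    (t₁ t₂ x₁ x₂ : ℝ)
    (ht₁ : t₁ = (1 - Real.sqrt (1 + γ ^ 2 * ω)
        + Real.sqrt (γ ^ 2 * ω - 2 + 2 * Real.sqrt (1 + γ ^ 2 * ω)))
      / (2 * γ * Real.sqrt ω))
    (ht₂ : t₂ = (-1 + Real.sqrt (1 + γ ^ 2 * ω)
        + Real.sqrt (γ ^ 2 * ω - 2 + 2 * Real.sqrt (1 + γ ^ 2 * ω)))
      / (2 * γ * Real.sqrt ω))
    (hx₁ : x₁ = (1 / (2 * Real.sqrt ω)) * Real.log ((1 + t₁) / (1 - t₁)))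
    (hx₂ : x₂ = (1 / (2 * Real.sqrt ω)) * Real.log ((1 + t₂) / (1 - t₂)))
    (f₁ f₂ ψ : ℝ → ℝ)
    (hf₁ : ∀ x, f₁ x = Real.sqrt (2 * ω / lam) * sech (Real.sqrt ω * (x - x₁)))
    (hf₂ : ∀ x, f₂ x = Real.sqrt (2 * ω / lam) * sech (Real.sqrt ω * (x - x₂)))
    (hψ : ∀ x, ψ x = if x < 0 then f₁ x else f₂ x) :
    (∫ x : ℝ, (ψ x) ^ 2)
      = 4 * Real.sqrt ω / lam + (2 / (lam * γ)) * Real.sqrt (1 + γ ^ 2 * ω) - 2 / (lam * γ) ∧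
    (1 / 2) * (∫ x in ({(0:ℝ)}ᶜ : Set ℝ), (deriv ψ x) ^ 2)
        - (1 / (2 * γ)) * (f₂ 0 - f₁ 0) ^ 2 - (lam / 4) * (∫ x : ℝ, (ψ x) ^ 4)
      = -(2 / (3 * lam)) * ω ^ ((3:ℝ)/2)
        + ((2 - γ ^ 2 * ω) / (3 * lam * γ ^ 3)) * Real.sqrt (γ ^ 2 * ω + 1)
        - 2 / (3 * lam * γ ^ 3) ∧
    ((1 / 2) * (∫ x in ({(0:ℝ)}ᶜ : Set ℝ), (deriv ψ x) ^ 2)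
        - (1 / (2 * γ)) * (f₂ 0 - f₁ 0) ^ 2 - (lam / 4) * (∫ x : ℝ, (ψ x) ^ 4))
        + (ω / 2) * (∫ x : ℝ, (ψ x) ^ 2)
      = (4 / (3 * lam)) * ω ^ ((3:ℝ)/2)
        + (2 / (3 * lam * γ ^ 3)) * (γ ^ 2 * ω + 1) ^ ((3:ℝ)/2)
        - ω / (lam * γ) - 2 / (3 * lam * γ ^ 3) := by

  set c := Real.sqrt ω with hcdef
  have hc : 0 < c := Real.sqrt_pos.mpr hω
  have hc2 : c^2 = ω := Real.sq_sqrt hω.le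
  set s := Real.sqrt (1 + γ^2*ω) with hsdef
  have hs1 : 1 < s := by
    rw [hsdef]
    have h := Real.sqrt_lt_sqrt (by norm_num : (0:ℝ) ≤ 1) (by nlinarith [mul_pos (pow_pos hγ 2) hω] : (1:ℝ) < 1 + γ^2*ω)
    simpa using h
  have hs2 : s^2 = 1 + γ^2*ω := Real.sq_sqrt (by positivity)
  have hs0 : 0 < s := by linarith
  set r := Real.sqrt (γ^2*ω - 2 + 2*s) with hrdef
  have hr0 : 0 ≤ r := Real.sqrt_nonneg _
  have hr2 : r^2 = γ^2*ω - 2 + 2*s := Real.sq_sqrt (by nlinarith)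
  have h2gc : (0:ℝ) < 2*γ*c := by positivity
  -- positivity of t₁, t₂
  have hrs : (r - (s-1)) * (r + (s-1)) = 4*(s-1) := by linear_combination hr2 - hs2
  have hrs1 : 0 < r - (s-1) := by nlinarith
  have ht1pos : 0 < t₁ := by rw [ht₁]; apply div_pos (by nlinarith) h2gc
  have ht2pos : 0 < t₂ := by rw [ht₂]; apply div_pos (by nlinarith) h2gc
  have hsum : t₁^2 + t₂^2 = 1 := by
    rw [ht₁, ht₂]
    field_simp
    linear_combination 2*hr2 + 2*hs2 - 4*γ^2*hc2
  have ht1lt : t₁ < 1 := by nlinarith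
  have ht2lt : t₂ < 1 := by nlinarith
  have hD : γ*c*(t₂ - t₁) = s - 1 := by
    rw [ht₁, ht₂]; field_simp; ring
  have hp : γ^2*c^2*(t₁*t₂) = s - 1 := by
    rw [ht₁, ht₂]; field_simp
    linear_combination hr2 - hs2
  -- boundary values
  have hcx1 : c * x₁ = (1/2) * Real.log ((1+t₁)/(1-t₁)) := by
    rw [hx₁, show c * (1/(2*c) * Real.log ((1+t₁)/(1-t₁)))
      = (c/c) * ((1/2) * Real.log ((1+t₁)/(1-t₁))) by ring, div_self hc.ne', one_mul]
  have hcx2 : c * x₂ = (1/2) * Real.log ((1+t₂)/(1-t₂)) := by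
    rw [hx₂, show c * (1/(2*c) * Real.log ((1+t₂)/(1-t₂)))
      = (c/c) * ((1/2) * Real.log ((1+t₂)/(1-t₂))) by ring, div_self hc.ne', one_mul]
  have hT1 := tanh_cosh_half_log (by linarith : (-1:ℝ) < t₁) ht1lt
  have hT2 := tanh_cosh_half_log (by linarith : (-1:ℝ) < t₂) ht2lt
  have htanh1 : Real.tanh (c*x₁) = t₁ := by rw [hcx1]; exact hT1.1
  have htanh2 : Real.tanh (c*x₂) = t₂ := by rw [hcx2]; exact hT2.1
  have hcosh1 : Real.cosh (c*x₁) = 1/t₂ := by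
    rw [hcx1, hT1.2, show 1 - t₁^2 = t₂^2 by linarith, Real.sqrt_sq ht2pos.le]
  have hcosh2 : Real.cosh (c*x₂) = 1/t₁ := by
    rw [hcx2, hT2.2, show 1 - t₂^2 = t₁^2 by linarith, Real.sqrt_sq ht1pos.le]
  set B := Real.sqrt (2*ω/lam) with hBdef
  have hB2 : B^2 = 2*ω/lam := Real.sq_sqrt (by positivity)
  -- jump value
  have hf10 : f₁ 0 = B * t₂ := by
    rw [hf₁ 0, sech, show c * ((0:ℝ) - x₁) = -(c*x₁) by ring, Real.cosh_neg, hcosh1]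
    field_simp
  have hf20 : f₂ 0 = B * t₁ := by
    rw [hf₂ 0, sech, show c * ((0:ℝ) - x₂) = -(c*x₂) by ring, Real.cosh_neg, hcosh2]
    field_simp
  -- splitting lemmas
  have hsplitc : ∀ g : ℝ → ℝ, IntegrableOn g (Iio 0) → IntegrableOn g (Ioi 0) →
      (∫ x in ({(0:ℝ)}ᶜ : Set ℝ), g x) = (∫ x in Iio (0:ℝ), g x) + ∫ x in Ioi (0:ℝ), g x := by
    intro g h1 h2
    rw [← Iio_union_Ioi,
      setIntegral_union ((Iic_disjoint_Ioi le_rfl).mono_left Iio_subset_Iic_self)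
        measurableSet_Ioi h1 h2]
  have hfull : ∀ g : ℝ → ℝ, (∫ x, g x) = ∫ x in ({(0:ℝ)}ᶜ : Set ℝ), g x := by
    intro g
    rw [restrict_compl_singleton]
  -- ψ² integral
  have heq2a : EqOn (fun x => (ψ x)^2) (fun x => B^2 * (1/Real.cosh (c*(x - x₁)))^2) (Iio 0) := by
    intro x hx
    simp only
    rw [hψ x, if_pos (mem_Iio.mp hx), hf₁ x, sech]
    ring
  have heq2b : EqOn (fun x => (ψ x)^2) (fun x => B^2 * (1/Real.cosh (c*(x - x₂)))^2) (Ioi 0) := by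
    intro x hx
    simp only
    rw [hψ x, if_neg (not_lt.mpr (le_of_lt (mem_Ioi.mp hx))), hf₂ x, sech]
    ring
  have hN : (∫ x, (ψ x)^2) = B^2*((1 - t₁)/c) + B^2*((1 + t₂)/c) := by
    rw [hfull, hsplitc _
      (IntegrableOn.congr_fun ((I2neg hc x₁).2.const_mul (B^2)) heq2a.symm measurableSet_Iio)
      (IntegrableOn.congr_fun ((I2pos hc x₂).2.const_mul (B^2)) heq2b.symm measurableSet_Ioi)]
    rw [setIntegral_congr_fun measurableSet_Iio heq2a,
        setIntegral_congr_fun measurableSet_Ioi heq2b,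
        integral_const_mul, integral_const_mul,
        (I2neg hc x₁).1, (I2pos hc x₂).1, htanh1, htanh2]
  -- ψ⁴ integral
  have heq4a : EqOn (fun x => (ψ x)^4) (fun x => (B^2)^2 * (1/Real.cosh (c*(x - x₁)))^4) (Iio 0) := by
    intro x hx
    simp only
    rw [hψ x, if_pos (mem_Iio.mp hx), hf₁ x, sech]
    ring
  have heq4b : EqOn (fun x => (ψ x)^4) (fun x => (B^2)^2 * (1/Real.cosh (c*(x - x₂)))^4) (Ioi 0) := by
    intro x hx
    simp only
    rw [hψ x, if_neg (not_lt.mpr (le_of_lt (mem_Ioi.mp hx))), hf₂ x, sech]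
    ring
  have hQ : (∫ x, (ψ x)^4) = (B^2)^2*((2/3 - t₁ + t₁^3/3)/c) + (B^2)^2*((2/3 + t₂ - t₂^3/3)/c) := by
    rw [hfull, hsplitc _
      (IntegrableOn.congr_fun ((I4neg hc x₁).2.const_mul ((B^2)^2)) heq4a.symm measurableSet_Iio)
      (IntegrableOn.congr_fun ((I4pos hc x₂).2.const_mul ((B^2)^2)) heq4b.symm measurableSet_Ioi)]
    rw [setIntegral_congr_fun measurableSet_Iio heq4a,
        setIntegral_congr_fun measurableSet_Ioi heq4b,
        integral_const_mul, integral_const_mul,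
        (I4neg hc x₁).1, (I4pos hc x₂).1, htanh1, htanh2]
  -- derivative of ψ
  have hdera : EqOn (fun x => (deriv ψ x)^2)
      (fun x => B^2*c^2 * ((1/Real.cosh (c*(x - x₁)))^2 * Real.tanh (c*(x - x₁))^2)) (Iio 0) := by
    intro x hx
    have hev : ψ =ᶠ[𝓝 x] f₁ := by
      filter_upwards [Iio_mem_nhds (mem_Iio.mp hx)] with y hy
      rw [hψ y, if_pos (mem_Iio.mp hy)]
    simp only
    rw [hev.deriv_eq]
    have hcoshd := (Real.hasDerivAt_cosh (c*(x-x₁))).comp x (hasDerivAt_lin c x₁ x)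
    have hda := ((hasDerivAt_const x (1:ℝ)).div hcoshd (Real.cosh_pos _).ne').const_mul B
    have hda' : HasDerivAt f₁
        (B * ((0 * Real.cosh (c*(x-x₁)) - 1 * (Real.sinh (c*(x-x₁)) * c))
          / (Real.cosh (c*(x-x₁)))^2)) x := by
      refine HasDerivAt.congr_of_eventuallyEq hda (Filter.Eventually.of_forall fun y => ?_)
      show f₁ y = B * (1 / Real.cosh (c*(y - x₁)))
      rw [hf₁ y, sech]
    rw [hda'.deriv, Real.tanh_eq_sinh_div_cosh]
    have h0 := (Real.cosh_pos (c*(x-x₁))).ne'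
    field_simp
    ring
  have hderb : EqOn (fun x => (deriv ψ x)^2)
      (fun x => B^2*c^2 * ((1/Real.cosh (c*(x - x₂)))^2 * Real.tanh (c*(x - x₂))^2)) (Ioi 0) := by
    intro x hx
    have hev : ψ =ᶠ[𝓝 x] f₂ := by
      filter_upwards [Ioi_mem_nhds (mem_Ioi.mp hx)] with y hy
      rw [hψ y, if_neg (not_lt.mpr (le_of_lt (mem_Ioi.mp hy)))]
    simp only
    rw [hev.deriv_eq]
    have hcoshd := (Real.hasDerivAt_cosh (c*(x-x₂))).comp x (hasDerivAt_lin c x₂ x)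
    have hda := ((hasDerivAt_const x (1:ℝ)).div hcoshd (Real.cosh_pos _).ne').const_mul B
    have hda' : HasDerivAt f₂
        (B * ((0 * Real.cosh (c*(x-x₂)) - 1 * (Real.sinh (c*(x-x₂)) * c))
          / (Real.cosh (c*(x-x₂)))^2)) x := by
      refine HasDerivAt.congr_of_eventuallyEq hda (Filter.Eventually.of_forall fun y => ?_)
      show f₂ y = B * (1 / Real.cosh (c*(y - x₂)))
      rw [hf₂ y, sech]
    rw [hda'.deriv, Real.tanh_eq_sinh_div_cosh]
    have h0 := (Real.cosh_pos (c*(x-x₂))).ne'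
    field_simp
    ring
  have hK : (∫ x in ({(0:ℝ)}ᶜ : Set ℝ), (deriv ψ x)^2)
      = B^2*c^2*((1 - t₁^3)/(3*c)) + B^2*c^2*((1 + t₂^3)/(3*c)) := by
    rw [hsplitc _
      (IntegrableOn.congr_fun ((I22neg hc x₁).2.const_mul (B^2*c^2)) hdera.symm measurableSet_Iio)
      (IntegrableOn.congr_fun ((I22pos hc x₂).2.const_mul (B^2*c^2)) hderb.symm measurableSet_Ioi)]
    rw [setIntegral_congr_fun measurableSet_Iio hdera,
        setIntegral_congr_fun measurableSet_Ioi hderb,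
        integral_const_mul, integral_const_mul,
        (I22neg hc x₁).1, (I22pos hc x₂).1, htanh1, htanh2]
  -- rpow computations
  have hrpow : ∀ a : ℝ, 0 ≤ a → (a^2) ^ ((3:ℝ)/2) = a^3 := by
    intro a ha
    rw [← Real.rpow_natCast a 2, ← Real.rpow_mul ha]
    norm_num
  have hw32 : ω ^ ((3:ℝ)/2) = c^3 := by rw [← hc2, hrpow c hc.le]
  have hsq2 : Real.sqrt (γ^2*ω + 1) = s := by rw [hsdef]; congr 1; ring
  have hs32 : (γ^2*ω + 1) ^ ((3:ℝ)/2) = s^3 := by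
    rw [show γ^2*ω + 1 = s^2 by linarith, hrpow s hs0.le]
  -- final algebra
  have hcube : t₂^3 - t₁^3 = (t₂ - t₁)*(1 + t₁*t₂) := by
    linear_combination (t₂ - t₁)*hsum
  have hjump : (B*t₁ - B*t₂)^2 = 2*ω/lam*(t₁ - t₂)^2 := by
    rw [show (2:ℝ)*ω/lam = B^2 from hB2.symm]; ring
  have hs2' : s^2 = 1 + γ^2*c^2 := by rw [hc2]; exact hs2
  have hdv : t₂ - t₁ = (s-1)/(γ*c) := by
    rw [← hD]; field_simp
  have hPv : t₁*t₂ = (s-1)/(γ^2*c^2) := by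
    rw [← hp]; field_simp
  have hd2 : (t₁-t₂)^2 = 1 - 2*(t₁*t₂) := by linear_combination hsum
  refine ⟨?_, ?_, ?_⟩
  · rw [hN, hB2, ← hc2]
    rw [show s = 1 + γ*c*(t₂-t₁) by linarith [hD]]
    field_simp
    ring
  · rw [hK, hf20, hf10, hQ, hw32, hsq2, hjump, hB2, ← hc2]
    calc _ = 2*c^2/lam * (-c/3 + c*(t₂^3-t₁^3)/3 - c*(t₂-t₁)/2 - (t₁-t₂)^2/(2*γ)) := by
            field_simp; ring
      _ = 2*c^2/lam * (-c/3 + c*((t₂-t₁)*(1+t₁*t₂))/3 - c*(t₂-t₁)/2 - (1-2*(t₁*t₂))/(2*γ)) := by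
            rw [hcube, hd2]
      _ = 2*c^2/lam * (-c/3 + c*((s-1)/(γ*c)*(1+(s-1)/(γ^2*c^2)))/3 - c*((s-1)/(γ*c))/2
            - (1-2*((s-1)/(γ^2*c^2)))/(2*γ)) := by rw [hdv, hPv]
      _ = _ := by
            field_simp
            linear_combination 2 * hs2'
  · rw [hK, hf20, hf10, hQ, hN, hw32, hs32, hjump, hB2, ← hc2]
    calc _ = 2*c^2/lam * (-c/3 + c*(t₂^3-t₁^3)/3 - c*(t₂-t₁)/2 - (t₁-t₂)^2/(2*γ))
            + c^2/2 * (2*c^2/lam * ((2 + (t₂-t₁))/c)) := by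
            field_simp; ring
      _ = 2*c^2/lam * (-c/3 + c*((t₂-t₁)*(1+t₁*t₂))/3 - c*(t₂-t₁)/2 - (1-2*(t₁*t₂))/(2*γ))
            + c^2/2 * (2*c^2/lam * ((2 + (t₂-t₁))/c)) := by
            rw [hcube, hd2]
      _ = 2*c^2/lam * (-c/3 + c*((s-1)/(γ*c)*(1+(s-1)/(γ^2*c^2)))/3 - c*((s-1)/(γ*c))/2
            - (1-2*((s-1)/(γ^2*c^2)))/(2*γ))
            + c^2/2 * (2*c^2/lam * ((2 + (s-1)/(γ*c))/c)) := by rw [hdv, hPv]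
      _ = _ := by
            field_simp
            linear_combination (2 - 2*s) * hs2'

end
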